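/- Let n ≥ 3 be odd and assume W is a nontrivial commutative ring. Then: (a) the image of Φ̄_n : R_n/I_n → R_{n−1}/I_{n−1} contains the classes of all the variables P_i, B_J, T_J of R_{n−1}, as well as the class of X², and the classes of B_J·X and T_J·X for all J ⊆ {1,…,r(n−1)}; (b) the class of X in R_{n−1}/I_{n−1} does NOT lie in the image of Φ̄_n; (c) the W-algebra homomorphism q : R_{n−1}/I_{n−1} → W[X]/(X²) sending the class of X to X and the classes of all other variables P_i, B_J, T_J to 0 is well defined and surjective, and the quotient of R_{n−1}/I_{n−1} by the ideal generated by the Φ̄_n-images of the classes of all variables of R_n is isomorphic via q to W[X]/(X²). (This is the exact sequence R_n/I_n → R_{n−1}/I_{n−1} → W[X]/(X²) → 0 of graded W-algebras of Lemma 3.19 of the paper.) -/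

import Mathlib

open MvPolynomial

/-- `r(n) = ⌊(n−1)/2⌋`, the largest index of a Pontryagin-class variable in `R_n`. -/
def rr (n : ℕ) : ℕ := (n - 1) / 2

/-- The index type of the variables of the polynomial `W`-algebra `R_n` (with `r = r(n)`):
the Pontryagin variables `P_i` (`1 ≤ i ≤ r`), the Euler variable `X`, the Bockstein
variables `B_J` for nonempty `J ⊆ {1,…,r}`, and the twisted Bockstein variables `T_J`
for `J ⊆ {1,…,r}` (including `T_∅`). -/
abbrev GVar (r : ℕ) : Type :=
  {i : ℕ // 1 ≤ i ∧ i ≤ r} ⊕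
    (Unit ⊕ ({J : Finset ℕ // J ⊆ Finset.Icc 1 r ∧ J.Nonempty} ⊕
      {J : Finset ℕ // J ⊆ Finset.Icc 1 r}))

/-- The polynomial `W`-algebra `R_n` on the variables above, for `r = r(n)`. -/
abbrev Rg (W : Type) [CommRing W] (r : ℕ) : Type := MvPolynomial (GVar r) W

variable (W : Type) [CommRing W]

/-- The variable `P_i` (zero if `i` is out of range). -/
noncomputable def Pv (r : ℕ) (i : ℕ) : Rg W r :=
  if h : 1 ≤ i ∧ i ≤ r then X (Sum.inl ⟨i, h⟩) else 0

/-- The variable `X`. -/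
noncomputable def Xv (r : ℕ) : Rg W r := X (Sum.inr (Sum.inl ()))

/-- The variable `B_J`, with the convention `B_∅ = 0` (and zero if `J ⊄ {1,…,r}`). -/
noncomputable def Bv (r : ℕ) (J : Finset ℕ) : Rg W r :=
  if h : J ⊆ Finset.Icc 1 r ∧ J.Nonempty then X (Sum.inr (Sum.inr (Sum.inl ⟨J, h⟩))) else 0

/-- The variable `T_J` (zero if `J ⊄ {1,…,r}`). -/
noncomputable def Tv (r : ℕ) (J : Finset ℕ) : Rg W r :=
  if h : J ⊆ Finset.Icc 1 r then X (Sum.inr (Sum.inr (Sum.inr ⟨J, h⟩))) else 0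

/-- `P_A = ∏_{a ∈ A} P_a`. -/
noncomputable def PP (r : ℕ) (A : Finset ℕ) : Rg W r := ∏ a ∈ A, Pv W r a

/-- Symmetric difference `Δ(A,B) = (A ∪ B) ∖ (A ∩ B)`. -/
def sdiff' (A B : Finset ℕ) : Finset ℕ := (A ∪ B) \ (A ∩ B)

/-- The generating set of the ideal `I_n ⊆ R_n`:
(1) `w·B_J`, `w·T_J` for `w ∈ I`;
(2) `X − T_{{(n−1)/2}}` if `n ≥ 3` is odd, and `X − T_∅` if `n = 1`;
(3) the four families of quadratic relations among the Bockstein classes. -/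
def relSet (Iid : Ideal W) (n : ℕ) : Set (Rg W (rr n)) :=
  {f | ∃ w ∈ Iid, ∃ J : Finset ℕ,
      f = C w * Bv W (rr n) J ∨ f = C w * Tv W (rr n) J} ∪
  {f | (n % 2 = 1 ∧ 3 ≤ n ∧ f = Xv W (rr n) - Tv W (rr n) {(n - 1) / 2}) ∨
       (n = 1 ∧ f = Xv W (rr n) - Tv W (rr n) ∅)} ∪
  {f | ∃ J J' : Finset ℕ, J ⊆ Finset.Icc 1 (rr n) ∧ J' ⊆ Finset.Icc 1 (rr n) ∧ J.Nonempty ∧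
      (f = Bv W (rr n) J * Bv W (rr n) J' -
            ∑ k ∈ J, Bv W (rr n) {k} * PP W (rr n) ((J.erase k) ∩ J') *
              Bv W (rr n) (sdiff' (J.erase k) J') ∨
       f = Bv W (rr n) J * Tv W (rr n) J' -
            ∑ k ∈ J, Bv W (rr n) {k} * PP W (rr n) ((J.erase k) ∩ J') *
              Tv W (rr n) (sdiff' (J.erase k) J') ∨
       f = Tv W (rr n) J * Bv W (rr n) J' - Bv W (rr n) J * Tv W (rr n) J' -
            Tv W (rr n) ∅ * PP W (rr n) (J ∩ J') * Bv W (rr n) (sdiff' J J') ∨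
       f = Tv W (rr n) J * Tv W (rr n) J' - Bv W (rr n) J * Bv W (rr n) J' -
            Tv W (rr n) ∅ * PP W (rr n) (J ∩ J') * Tv W (rr n) (sdiff' J J'))}

/-- The ideal `I_n ⊆ R_n`. -/
noncomputable def relIdeal (Iid : Ideal W) (n : ℕ) : Ideal (Rg W (rr n)) :=
  Ideal.span (relSet W Iid n)

/-- The value of `Φ_n` on the variables of `R_n`: `X ↦ 0`;
`P_i ↦ P_i` except `P_{(n−1)/2} ↦ X²` when `n` is odd;
`B_J ↦ B_J` and `T_J ↦ T_J` when `(n−1)/2 ∉ J` (or `n` is even), while for `n` odd and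
`J = J′ ⊔ {(n−1)/2}` one has `B_J ↦ T_{J′}·X` and `T_J ↦ B_{J′}·X`. -/
noncomputable def phiVar (n : ℕ) : GVar (rr n) → Rg W (rr (n - 1))
  | Sum.inl p =>
      if n % 2 = 1 ∧ p.1 = (n - 1) / 2 then (Xv W (rr (n - 1))) ^ 2
      else Pv W (rr (n - 1)) p.1
  | Sum.inr (Sum.inl _) => 0
  | Sum.inr (Sum.inr (Sum.inl p)) =>
      if n % 2 = 1 ∧ (n - 1) / 2 ∈ p.1 then
        Tv W (rr (n - 1)) (p.1.erase ((n - 1) / 2)) * Xv W (rr (n - 1))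
      else Bv W (rr (n - 1)) p.1
  | Sum.inr (Sum.inr (Sum.inr p)) =>
      if n % 2 = 1 ∧ (n - 1) / 2 ∈ p.1 then
        Bv W (rr (n - 1)) (p.1.erase ((n - 1) / 2)) * Xv W (rr (n - 1))
      else Tv W (rr (n - 1)) p.1

/-- The `W`-algebra homomorphism `Φ_n : R_n → R_{n−1}`. -/
noncomputable def Phi (n : ℕ) : Rg W (rr n) →ₐ[W] Rg W (rr (n - 1)) :=
  aeval (phiVar W n)

/-! ### Auxiliary lemmas for Lemma 3.19 -/

section Aux319

/-- The evaluation `R_{r} → W[X]/(X²)` sending `X ↦ X` and all other variables to `0`. -/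
noncomputable def qAux (r : ℕ) :
    Rg W r →ₐ[W] (Polynomial W ⧸ Ideal.span {(Polynomial.X : Polynomial W) ^ 2}) :=
  aeval (fun v : GVar r => match v with
    | Sum.inr (Sum.inl _) =>
        Ideal.Quotient.mk (Ideal.span {(Polynomial.X : Polynomial W) ^ 2}) Polynomial.X
    | _ => 0)

variable {W}

lemma qAux_Xv (r : ℕ) :
    qAux W r (Xv W r) = Ideal.Quotient.mk _ Polynomial.X := by
  simp [qAux, Xv]

lemma qAux_Pv (r i : ℕ) : qAux W r (Pv W r i) = 0 := by
  unfold Pv; split <;> simp [qAux]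

lemma qAux_Bv (r : ℕ) (J : Finset ℕ) : qAux W r (Bv W r J) = 0 := by
  unfold Bv; split <;> simp [qAux]

lemma qAux_Tv (r : ℕ) (J : Finset ℕ) : qAux W r (Tv W r J) = 0 := by
  unfold Tv; split <;> simp [qAux]

lemma qAux_C (r : ℕ) (a : W) :
    qAux W r (C a) = Ideal.Quotient.mk _ (Polynomial.C a) := by
  rw [show (C a : Rg W r) = algebraMap W _ a from (MvPolynomial.algebraMap_eq W _).symm ▸ rfl,
    AlgHom.commutes, ← Ideal.Quotient.mk_algebraMap, Polynomial.algebraMap_eq]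

lemma mkX_sq :
    (Ideal.Quotient.mk (Ideal.span {(Polynomial.X : Polynomial W) ^ 2}) Polynomial.X) ^ 2
      = 0 := by
  rw [← map_pow, Ideal.Quotient.eq_zero_iff_mem]
  exact Ideal.mem_span_singleton_self _

lemma quot_repr (y : Polynomial W ⧸ Ideal.span {(Polynomial.X : Polynomial W) ^ 2}) :
    ∃ a b : W, y = Ideal.Quotient.mk _ (Polynomial.C a + Polynomial.C b * Polynomial.X) := by
  obtain ⟨p, rfl⟩ := Ideal.Quotient.mk_surjective y
  refine ⟨p.coeff 0, p.coeff 1, ?_⟩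
  rw [Ideal.Quotient.eq, Ideal.mem_span_singleton, Polynomial.X_pow_dvd_iff]
  intro d hd
  interval_cases d <;> simp

lemma quot_inj {a b : W}
    (h : Ideal.Quotient.mk (Ideal.span {(Polynomial.X : Polynomial W) ^ 2})
        (Polynomial.C a + Polynomial.C b * Polynomial.X) = 0) : a = 0 ∧ b = 0 := by
  rw [Ideal.Quotient.eq_zero_iff_mem, Ideal.mem_span_singleton,
    Polynomial.X_pow_dvd_iff] at h
  have h0 := h 0 (by norm_num)
  have h1 := h 1 (by norm_num)
  simp at h0 h1
  exact ⟨h0, h1⟩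

lemma key_decomp (r' : ℕ) (I : Ideal (Rg W r')) (K : Ideal (Rg W r' ⧸ I))
    (hvar : ∀ v : GVar r', v ≠ Sum.inr (Sum.inl ()) → Ideal.Quotient.mk I (X v) ∈ K)
    (hX2 : Ideal.Quotient.mk I (Xv W r' ^ 2) ∈ K) (f : Rg W r') :
    ∃ a b : W,
      Ideal.Quotient.mk I f - Ideal.Quotient.mk I (C a + C b * Xv W r') ∈ K := by
  induction f using MvPolynomial.induction_on with
  | C a => exact ⟨a, 0, by simp⟩
  | add f g hf hg =>
      obtain ⟨a, b, hf⟩ := hf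
      obtain ⟨a', b', hg⟩ := hg
      refine ⟨a + a', b + b', ?_⟩
      have := K.add_mem hf hg
      convert this using 1
      simp only [map_add, map_mul, map_sub, C_add]
      ring
  | mul_X f v hf =>
      obtain ⟨a, b, hf⟩ := hf
      by_cases hv : v = Sum.inr (Sum.inl ())
      · subst hv
        refine ⟨0, a, ?_⟩
        have heq : Ideal.Quotient.mk I (f * X (Sum.inr (Sum.inl ()))) -
            Ideal.Quotient.mk I (C 0 + C a * Xv W r') =
            (Ideal.Quotient.mk I f - Ideal.Quotient.mk I (C a + C b * Xv W r')) *
              Ideal.Quotient.mk I (Xv W r') +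
            Ideal.Quotient.mk I (C b) * Ideal.Quotient.mk I (Xv W r' ^ 2) := by
          simp only [Xv, map_add, map_mul, map_sub, map_pow, C_0, map_zero]
          ring
        rw [heq]
        exact K.add_mem (K.mul_mem_right _ hf) (K.mul_mem_left _ hX2)
      · refine ⟨0, 0, ?_⟩
        have heq : Ideal.Quotient.mk I (f * X v) -
            Ideal.Quotient.mk I (C 0 + C 0 * Xv W r') =
            Ideal.Quotient.mk I f * Ideal.Quotient.mk I (X v) := by
          simp [map_mul]
        rw [heq]
        exact K.mul_mem_left _ (hvar v hv)

end Aux319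

/-- Lemma 3.19: for odd `n ≥ 3` and `W` nontrivial, with `im` the image of
`Φ̄_n : R_n/I_n → R_{n−1}/I_{n−1}`:
(a) the classes of the variables `P_i`, `B_J`, `T_J` of `R_{n−1}`, and the classes of
`X²`, `B_J·X`, `T_J·X`, all lie in `im`;
(b) the class of `X` does not lie in `im`;
(c) there is a surjective `W`-algebra homomorphism `q : R_{n−1}/I_{n−1} → W[X]/(X²)`
sending the class of `X` to `X` and the classes of all other variables to `0`, whose
kernel is the ideal generated by the `Φ̄_n`-images of the classes of the variables of
`R_n`; i.e. `R_n/I_n → R_{n−1}/I_{n−1} → W[X]/(X²) → 0` is exact. -/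
theorem odd_case_exact_sequence (W : Type) [CommRing W] [Nontrivial W] (Iid : Ideal W)
    (n : ℕ) (hn : 3 ≤ n) (hodd : n % 2 = 1) :
    (∀ i : ℕ, 1 ≤ i → i ≤ rr (n - 1) →
      Ideal.Quotient.mk (relIdeal W Iid (n - 1)) (Pv W (rr (n - 1)) i) ∈
        Set.range (fun f : Rg W (rr n) =>
          Ideal.Quotient.mk (relIdeal W Iid (n - 1)) (Phi W n f))) ∧
    (∀ J : Finset ℕ, J ⊆ Finset.Icc 1 (rr (n - 1)) →
      Ideal.Quotient.mk (relIdeal W Iid (n - 1)) (Bv W (rr (n - 1)) J) ∈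
        Set.range (fun f : Rg W (rr n) =>
          Ideal.Quotient.mk (relIdeal W Iid (n - 1)) (Phi W n f)) ∧
      Ideal.Quotient.mk (relIdeal W Iid (n - 1)) (Tv W (rr (n - 1)) J) ∈
        Set.range (fun f : Rg W (rr n) =>
          Ideal.Quotient.mk (relIdeal W Iid (n - 1)) (Phi W n f)) ∧
      Ideal.Quotient.mk (relIdeal W Iid (n - 1)) (Bv W (rr (n - 1)) J * Xv W (rr (n - 1))) ∈
        Set.range (fun f : Rg W (rr n) =>
          Ideal.Quotient.mk (relIdeal W Iid (n - 1)) (Phi W n f)) ∧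
      Ideal.Quotient.mk (relIdeal W Iid (n - 1)) (Tv W (rr (n - 1)) J * Xv W (rr (n - 1))) ∈
        Set.range (fun f : Rg W (rr n) =>
          Ideal.Quotient.mk (relIdeal W Iid (n - 1)) (Phi W n f))) ∧
    (Ideal.Quotient.mk (relIdeal W Iid (n - 1)) ((Xv W (rr (n - 1))) ^ 2) ∈
      Set.range (fun f : Rg W (rr n) =>
        Ideal.Quotient.mk (relIdeal W Iid (n - 1)) (Phi W n f))) ∧
    (Ideal.Quotient.mk (relIdeal W Iid (n - 1)) (Xv W (rr (n - 1))) ∉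
      Set.range (fun f : Rg W (rr n) =>
        Ideal.Quotient.mk (relIdeal W Iid (n - 1)) (Phi W n f))) ∧
    (∃ q : (Rg W (rr (n - 1)) ⧸ relIdeal W Iid (n - 1)) →ₐ[W]
        (Polynomial W ⧸ Ideal.span {(Polynomial.X : Polynomial W) ^ 2}),
      q (Ideal.Quotient.mk (relIdeal W Iid (n - 1)) (Xv W (rr (n - 1)))) =
        Ideal.Quotient.mk (Ideal.span {(Polynomial.X : Polynomial W) ^ 2}) Polynomial.X ∧
      (∀ i : ℕ, 1 ≤ i → i ≤ rr (n - 1) →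
        q (Ideal.Quotient.mk (relIdeal W Iid (n - 1)) (Pv W (rr (n - 1)) i)) = 0) ∧
      (∀ J : Finset ℕ, J ⊆ Finset.Icc 1 (rr (n - 1)) →
        q (Ideal.Quotient.mk (relIdeal W Iid (n - 1)) (Bv W (rr (n - 1)) J)) = 0 ∧
        q (Ideal.Quotient.mk (relIdeal W Iid (n - 1)) (Tv W (rr (n - 1)) J)) = 0) ∧
      Function.Surjective q ∧
      RingHom.ker q = Ideal.span (Set.range (fun v : GVar (rr n) =>
        Ideal.Quotient.mk (relIdeal W Iid (n - 1)) (Phi W n (X v))))) := by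
  have e1 : rr n = (n - 1) / 2 := rfl
  have e2 : rr (n - 1) = (n - 1 - 1) / 2 := rfl
  have hIcc : Finset.Icc 1 (rr (n - 1)) ⊆ Finset.Icc 1 (rr n) :=
    Finset.Icc_subset_Icc le_rfl (by omega)
  have hnotmem : ∀ J : Finset ℕ, J ⊆ Finset.Icc 1 (rr (n - 1)) → (n - 1) / 2 ∉ J := by
    intro J hJ h
    have := Finset.mem_Icc.mp (hJ h)
    omega
  have hPhiX : ∀ v : GVar (rr n), Phi W n (X v) = phiVar W n v := fun v =>
    aeval_X (phiVar W n) v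
  have exP : ∀ i : ℕ, 1 ≤ i → i ≤ rr (n - 1) →
      ∃ v : GVar (rr n), phiVar W n v = Pv W (rr (n - 1)) i := by
    intro i hi1 hi2
    refine ⟨Sum.inl ⟨i, hi1, by omega⟩, ?_⟩
    simp only [phiVar]
    rw [if_neg]
    rintro ⟨-, h⟩
    omega
  have exB : ∀ J : Finset ℕ, J ⊆ Finset.Icc 1 (rr (n - 1)) → J.Nonempty →
      ∃ v : GVar (rr n), phiVar W n v = Bv W (rr (n - 1)) J := by
    intro J hJ hne
    refine ⟨Sum.inr (Sum.inr (Sum.inl ⟨J, hJ.trans hIcc, hne⟩)), ?_⟩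
    simp only [phiVar]
    rw [if_neg]
    rintro ⟨-, h⟩
    exact hnotmem J hJ h
  have exT : ∀ J : Finset ℕ, J ⊆ Finset.Icc 1 (rr (n - 1)) →
      ∃ v : GVar (rr n), phiVar W n v = Tv W (rr (n - 1)) J := by
    intro J hJ
    refine ⟨Sum.inr (Sum.inr (Sum.inr ⟨J, hJ.trans hIcc⟩)), ?_⟩
    simp only [phiVar]
    rw [if_neg]
    rintro ⟨-, h⟩
    exact hnotmem J hJ h
  have hins : ∀ J : Finset ℕ, J ⊆ Finset.Icc 1 (rr (n - 1)) →
      insert ((n - 1) / 2) J ⊆ Finset.Icc 1 (rr n) := fun J hJ =>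
    Finset.insert_subset (Finset.mem_Icc.mpr ⟨by omega, by omega⟩) (hJ.trans hIcc)
  have exBX : ∀ J : Finset ℕ, J ⊆ Finset.Icc 1 (rr (n - 1)) →
      ∃ v : GVar (rr n), phiVar W n v = Bv W (rr (n - 1)) J * Xv W (rr (n - 1)) := by
    intro J hJ
    refine ⟨Sum.inr (Sum.inr (Sum.inr ⟨insert ((n - 1) / 2) J, hins J hJ⟩)), ?_⟩
    simp only [phiVar]
    rw [if_pos ⟨hodd, Finset.mem_insert_self _ _⟩, Finset.erase_insert (hnotmem J hJ)]
  have exTX : ∀ J : Finset ℕ, J ⊆ Finset.Icc 1 (rr (n - 1)) →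
      ∃ v : GVar (rr n), phiVar W n v = Tv W (rr (n - 1)) J * Xv W (rr (n - 1)) := by
    intro J hJ
    refine ⟨Sum.inr (Sum.inr (Sum.inl ⟨insert ((n - 1) / 2) J, hins J hJ,
      Finset.insert_nonempty _ _⟩)), ?_⟩
    simp only [phiVar]
    rw [if_pos ⟨hodd, Finset.mem_insert_self _ _⟩, Finset.erase_insert (hnotmem J hJ)]
  have exX2 : ∃ v : GVar (rr n), phiVar W n v = Xv W (rr (n - 1)) ^ 2 := by
    exact ⟨Sum.inl ⟨(n - 1) / 2, by omega, by omega⟩, by simp [phiVar, hodd]⟩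
  have hcompv : ∀ v : GVar (rr n), qAux W (rr (n - 1)) (phiVar W n v) = 0 := by
    rintro (p | u | p | p)
    · simp only [phiVar]
      split_ifs
      · rw [map_pow, qAux_Xv]; exact mkX_sq
      · exact qAux_Pv _ _
    · simp [phiVar]
    · simp only [phiVar]
      split_ifs
      · rw [map_mul, qAux_Tv, zero_mul]
      · exact qAux_Bv _ _
    · simp only [phiVar]
      split_ifs
      · rw [map_mul, qAux_Bv, zero_mul]
      · exact qAux_Tv _ _
  have hq0 : ∀ a ∈ relIdeal W Iid (n - 1), qAux W (rr (n - 1)) a = 0 := by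
    have hle : relIdeal W Iid (n - 1) ≤ RingHom.ker (qAux W (rr (n - 1))) := by
      rw [relIdeal, Ideal.span_le]
      intro f hf
      simp only [relSet, Set.mem_union, Set.mem_setOf_eq] at hf
      simp only [SetLike.mem_coe, RingHom.mem_ker]
      rcases hf with ((⟨w, hw, J, (rfl | rfl)⟩ | h) | ⟨J, J', hJ, hJ', hne,
        (rfl | rfl | rfl | rfl)⟩)
      · simp [qAux_Bv]
      · simp [qAux_Tv]
      · exfalso
        rcases h with ⟨h1, -, -⟩ | ⟨h1, -⟩ <;> omega
      · simp [qAux_Bv, qAux_Tv]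
      · simp [qAux_Bv, qAux_Tv]
      · simp [qAux_Bv, qAux_Tv]
      · simp [qAux_Bv, qAux_Tv]
    exact fun a ha => hle ha
  have hcomp : ∀ f : Rg W (rr n), qAux W (rr (n - 1)) (Phi W n f) =
      Ideal.Quotient.mk _ (Polynomial.C (constantCoeff f)) := by
    intro f
    have hext : (qAux W (rr (n - 1))).comp (Phi W n)
        = aeval (fun _ : GVar (rr n) =>
            (0 : Polynomial W ⧸ Ideal.span {(Polynomial.X : Polynomial W) ^ 2})) := by
      apply MvPolynomial.algHom_ext
      intro v
      simp only [AlgHom.comp_apply, hPhiX, hcompv, aeval_X]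
    have hval := DFunLike.congr_fun hext f
    simp only [AlgHom.comp_apply] at hval
    rw [hval, aeval_zero', ← Ideal.Quotient.mk_algebraMap, Polynomial.algebraMap_eq]
  have partb : Ideal.Quotient.mk (relIdeal W Iid (n - 1)) (Xv W (rr (n - 1))) ∉
      Set.range (fun f : Rg W (rr n) =>
        Ideal.Quotient.mk (relIdeal W Iid (n - 1)) (Phi W n f)) := by
    rintro ⟨f, hf⟩
    have hmem : Phi W n f - Xv W (rr (n - 1)) ∈ relIdeal W Iid (n - 1) :=
      Ideal.Quotient.eq.mp hf
    have h0 := hq0 _ hmem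
    rw [map_sub, hcomp, qAux_Xv, sub_eq_zero] at h0
    have hsp := Ideal.Quotient.eq.mp h0
    rw [Ideal.mem_span_singleton, Polynomial.X_pow_dvd_iff] at hsp
    have h1 := hsp 1 (by norm_num)
    simp at h1
  obtain ⟨q, hqmk⟩ : ∃ q : (Rg W (rr (n - 1)) ⧸ relIdeal W Iid (n - 1)) →ₐ[W]
      (Polynomial W ⧸ Ideal.span {(Polynomial.X : Polynomial W) ^ 2}),
      ∀ f : Rg W (rr (n - 1)),
        q (Ideal.Quotient.mk (relIdeal W Iid (n - 1)) f) = qAux W (rr (n - 1)) f :=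
    ⟨Ideal.Quotient.liftₐ _ (qAux W (rr (n - 1))) hq0, fun f => by
      rw [Ideal.Quotient.liftₐ_apply]
      rfl⟩
  refine ⟨?_, ?_, ?_, partb, q, ?_, ?_, ?_, ?_, ?_⟩
  · intro i hi1 hi2
    obtain ⟨v, hv⟩ := exP i hi1 hi2
    exact ⟨X v, by simp only [hPhiX, hv]⟩
  · intro J hJ
    refine ⟨?_, ?_, ?_, ?_⟩
    · rcases J.eq_empty_or_nonempty with rfl | hne
      · exact ⟨0, by simp [Bv]⟩
      · obtain ⟨v, hv⟩ := exB J hJ hne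
        exact ⟨X v, by simp only [hPhiX, hv]⟩
    · obtain ⟨v, hv⟩ := exT J hJ
      exact ⟨X v, by simp only [hPhiX, hv]⟩
    · obtain ⟨v, hv⟩ := exBX J hJ
      exact ⟨X v, by simp only [hPhiX, hv]⟩
    · obtain ⟨v, hv⟩ := exTX J hJ
      exact ⟨X v, by simp only [hPhiX, hv]⟩
  · obtain ⟨v, hv⟩ := exX2
    exact ⟨X v, by simp only [hPhiX, hv]⟩
  · rw [hqmk, qAux_Xv]
  · intro i hi1 hi2
    rw [hqmk, qAux_Pv]
  · intro J hJ
    rw [hqmk, hqmk, qAux_Bv, qAux_Tv]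
    exact ⟨rfl, rfl⟩
  · intro y
    obtain ⟨a, b, rfl⟩ := quot_repr y
    refine ⟨Ideal.Quotient.mk _ (C a + C b * Xv W (rr (n - 1))), ?_⟩
    rw [hqmk, map_add, map_mul, qAux_C, qAux_C, qAux_Xv, ← map_mul, ← map_add]
  · have memK : ∀ g : Rg W (rr (n - 1)), (∃ v : GVar (rr n), phiVar W n v = g) →
        Ideal.Quotient.mk (relIdeal W Iid (n - 1)) g ∈
          Ideal.span (Set.range (fun v : GVar (rr n) =>
            Ideal.Quotient.mk (relIdeal W Iid (n - 1)) (Phi W n (X v)))) := by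
      rintro g ⟨v, rfl⟩
      exact Ideal.subset_span ⟨v, by simp only [hPhiX]⟩
    have hvarK : ∀ v : GVar (rr (n - 1)), v ≠ Sum.inr (Sum.inl ()) →
        Ideal.Quotient.mk (relIdeal W Iid (n - 1)) (X v) ∈
          Ideal.span (Set.range (fun v : GVar (rr n) =>
            Ideal.Quotient.mk (relIdeal W Iid (n - 1)) (Phi W n (X v)))) := by
      rintro (⟨i, hi1, hi2⟩ | u | ⟨J, hJ, hne⟩ | ⟨J, hJ⟩) hv
      · have hPv : Pv W (rr (n - 1)) i = X (Sum.inl ⟨i, hi1, hi2⟩) := dif_pos ⟨hi1, hi2⟩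
        rw [← hPv]
        exact memK _ (exP i hi1 hi2)
      · exact absurd rfl hv
      · have hBv : Bv W (rr (n - 1)) J = X (Sum.inr (Sum.inr (Sum.inl ⟨J, hJ, hne⟩))) :=
          dif_pos ⟨hJ, hne⟩
        rw [← hBv]
        exact memK _ (exB J hJ hne)
      · have hTv : Tv W (rr (n - 1)) J = X (Sum.inr (Sum.inr (Sum.inr ⟨J, hJ⟩))) :=
          dif_pos hJ
        rw [← hTv]
        exact memK _ (exT J hJ)
    have hKle : Ideal.span (Set.range (fun v : GVar (rr n) =>
        Ideal.Quotient.mk (relIdeal W Iid (n - 1)) (Phi W n (X v)))) ≤ RingHom.ker q := by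
      rw [Ideal.span_le]
      rintro x ⟨v, rfl⟩
      simp only [SetLike.mem_coe, RingHom.mem_ker]
      rw [hqmk, hPhiX]
      exact hcompv v
    refine le_antisymm ?_ hKle
    intro x hx
    obtain ⟨f, rfl⟩ := Ideal.Quotient.mk_surjective x
    obtain ⟨a, b, hab⟩ := key_decomp (rr (n - 1)) (relIdeal W Iid (n - 1)) _ hvarK
      (memK _ exX2) f
    have hqz : q (Ideal.Quotient.mk (relIdeal W Iid (n - 1)) f) = 0 := RingHom.mem_ker.mp hx
    have h2 := hKle hab
    rw [RingHom.mem_ker, map_sub, hqz, zero_sub, neg_eq_zero] at h2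
    rw [hqmk, map_add, map_mul, qAux_C, qAux_C, qAux_Xv, ← map_mul, ← map_add] at h2
    obtain ⟨ha, hb⟩ := quot_inj h2
    subst ha
    subst hb
    have hz : Ideal.Quotient.mk (relIdeal W Iid (n - 1))
        (C (0 : W) + C (0 : W) * Xv W (rr (n - 1))) = 0 := by simp
    rw [hz, sub_zero] at hab
    exact hab
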